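/- Every prime p ≡ 1 (mod 4) can be written as a sum of two squares, and this representation is unique up to order: if p = a² + b² = c² + d² with 0 < a ≤ b and 0 < c ≤ d, then a = c and b = d. -/
import Mathlib

set_option maxHeartbeats 1000000

theorem stmt_16 (p : ℕ) (hp : p.Prime) (h1 : p % 4 = 1) :
    (∃ a b : ℕ, p = a ^ 2 + b ^ 2) ∧
      ∀ a b c d : ℕ, 0 < a → a ≤ b → 0 < c → c ≤ d →
        p = a ^ 2 + b ^ 2 → p = c ^ 2 + d ^ 2 → a = c ∧ b = d := by
  haveI : Fact p.Prime := ⟨hp⟩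
  constructor
  · obtain ⟨a, b, hab⟩ := Nat.Prime.sq_add_sq (p := p) (by omega)
    exact ⟨a, b, hab.symm⟩
  · intro a b c d ha hab hc hcd e1 e2
    have hpz : Prime (p : ℤ) := Nat.prime_iff_prime_int.mp hp
    have hA : (p : ℤ) = (a : ℤ) ^ 2 + (b : ℤ) ^ 2 := by exact_mod_cast e1
    have hC : (p : ℤ) = (c : ℤ) ^ 2 + (d : ℤ) ^ 2 := by exact_mod_cast e2
    have hApos : 1 ≤ (a : ℤ) := by exact_mod_cast ha
    have hBpos : 1 ≤ (b : ℤ) := by exact_mod_cast ha.trans_le hab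
    have hCpos : 1 ≤ (c : ℤ) := by exact_mod_cast hc
    have hDpos : 1 ≤ (d : ℤ) := by exact_mod_cast hc.trans_le hcd
    have hfinA : ∀ x y : ℕ, ((x : ℤ)) ^ 2 = ((y : ℤ)) ^ 2 → x = y := by
      intro x y hxy
      have : (x : ℤ) = y ∨ (x : ℤ) = -y := sq_eq_sq_iff_eq_or_eq_neg.mp hxy
      rcases this with h' | h'
      · exact_mod_cast h'
      · have hx : (0 : ℤ) ≤ x := Int.ofNat_nonneg x
        have hy : (0 : ℤ) ≤ y := Int.ofNat_nonneg y
        have : (x : ℤ) = y := by omega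
        exact_mod_cast this
    set A := (a : ℤ)
    set B := (b : ℤ)
    set C := (c : ℤ)
    set D := (d : ℤ)
    have hppos : (0 : ℤ) < p := by exact_mod_cast hp.pos
    have hdvd : (p : ℤ) ∣ (A * D - B * C) * (A * D + B * C) := by
      refine ⟨D ^ 2 - B ^ 2, ?_⟩
      linear_combination B ^ 2 * hC - D ^ 2 * hA
    have hid : (p : ℤ) ^ 2 = (A * C + B * D) ^ 2 + (A * D - B * C) ^ 2 := by
      linear_combination (p : ℤ) * hA + (A ^ 2 + B ^ 2) * hC
    have hid2 : (p : ℤ) ^ 2 = (A * C - B * D) ^ 2 + (A * D + B * C) ^ 2 := by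
      linear_combination (p : ℤ) * hA + (A ^ 2 + B ^ 2) * hC
    rcases hpz.dvd_mul.mp hdvd with h | h
    · -- p ∣ AD - BC
      obtain ⟨k, hk⟩ := h
      have hk0 : k = 0 := by
        by_contra hne
        have h1k : 1 ≤ k ^ 2 := by
          rcases lt_or_gt_of_ne hne with h' | h' <;> nlinarith
        have h2 : (A * D - B * C) ^ 2 = (p : ℤ) ^ 2 * k ^ 2 := by rw [hk]; ring
        have h3 : (p : ℤ) ^ 2 ≤ (A * D - B * C) ^ 2 := by
          rw [h2]
          exact le_mul_of_one_le_right (by positivity) h1k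
        have hac : (1 : ℤ) * 1 ≤ A * C := mul_le_mul hApos hCpos zero_le_one (by linarith)
        have hbd : (1 : ℤ) * 1 ≤ B * D := mul_le_mul hBpos hDpos zero_le_one (by linarith)
        have h4 : 1 ≤ (A * C + B * D) ^ 2 := by nlinarith
        linarith
      have h0 : A * D - B * C = 0 := by rw [hk, hk0, mul_zero]
      have hDB : (p : ℤ) * (D ^ 2 - B ^ 2) = 0 := by
        linear_combination D ^ 2 * hA - B ^ 2 * hC + (A * D + B * C) * h0
      have hDB2 : (D - B) * (D + B) = 0 := by
        rcases mul_eq_zero.mp hDB with h' | h'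
        · exact absurd h' (ne_of_gt hppos)
        · linear_combination h'
      have hDeqB : D = B := by
        rcases mul_eq_zero.mp hDB2 with h' | h' <;> linarith
      have hACsq : A ^ 2 = C ^ 2 := by
        have : D ^ 2 = B ^ 2 := by rw [hDeqB]
        linarith
      have hBD : B ^ 2 = D ^ 2 := by rw [hDeqB]
      have hbd : b = d := hfinA b d hBD
      exact ⟨hfinA a c hACsq, hbd⟩
    · -- p ∣ AD + BC
      obtain ⟨k, hk⟩ := h
      have had1 : (1 : ℤ) * 1 ≤ A * D := mul_le_mul hApos hDpos zero_le_one (by linarith)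
      have hbc1 : (1 : ℤ) * 1 ≤ B * C := mul_le_mul hBpos hCpos zero_le_one (by linarith)
      have hpk : 0 < (p : ℤ) * k := by rw [← hk]; linarith
      have hkpos : 1 ≤ k := by
        by_contra h'
        push_neg at h'
        have : (p : ℤ) * k ≤ 0 := mul_nonpos_of_nonneg_of_nonpos hppos.le (by omega)
        linarith
      have h1k : 1 ≤ k ^ 2 := by nlinarith
      have hsq : (p : ℤ) ^ 2 ≤ (A * D + B * C) ^ 2 := by
        have : (A * D + B * C) ^ 2 = (p : ℤ) ^ 2 * k ^ 2 := by rw [hk]; ring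
        rw [this]
        exact le_mul_of_one_le_right (by positivity) h1k
      have h0 : A * C - B * D = 0 := by
        have hz : (A * C - B * D) ^ 2 = 0 := le_antisymm (by linarith) (sq_nonneg _)
        exact sq_eq_zero_iff.mp hz
      have hCB : (p : ℤ) * (C ^ 2 - B ^ 2) = 0 := by
        linear_combination C ^ 2 * hA - B ^ 2 * hC + (A * C + B * D) * h0
      have hCeqB : C = B := by
        rcases mul_eq_zero.mp hCB with h' | h'
        · exact absurd h' (ne_of_gt hppos)
        · have h'' : (C - B) * (C + B) = 0 := by linear_combination h'
          rcases mul_eq_zero.mp h'' with h3 | h3 <;> linarith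
      have hADsq : A ^ 2 = D ^ 2 := by
        have : C ^ 2 = B ^ 2 := by rw [hCeqB]
        linarith
      have hBC : B ^ 2 = C ^ 2 := by rw [hCeqB]
      have hbc : b = c := hfinA b c hBC
      have had : a = d := hfinA a d hADsq
      omega
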